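/- Let {A_i} be a tower of abelian groups where each A_i is free abelian and the tower is the tower of duals Hom(B_i, ℤ) of a direct sequence {B_i} of abelian groups. Then lim¹_i Hom(B_i, ℤ) ≅ Ext¹_ℤ(colim_i B_i, ℤ) provided each B_i is free abelian of finite rank. -/

import Mathlib

open CategoryTheory

namespace Lim1ExtAux
open DirectSum

variable (B : ℕ → Type) [∀ i, AddCommGroup (B i)] (f : ∀ i, B i →+ B (i + 1))

noncomputable def shift : (⨁ i, B i) →ₗ[ℤ] ⨁ i, B i :=
  DirectSum.toModule ℤ ℕ _ fun i =>
    (DirectSum.lof ℤ ℕ (fun j => B j) (i + 1)).comp (f i).toIntLinearMap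

lemma shift_lof (i : ℕ) (b : B i) :
    shift B f (DirectSum.lof ℤ ℕ (fun j => B j) i b)
      = DirectSum.lof ℤ ℕ (fun j => B j) (i + 1) (f i b) := by
  simp [shift, DirectSum.toModule_lof]

noncomputable def tt : (⨁ i, B i) →ₗ[ℤ] ⨁ i, B i := LinearMap.id - shift B f

lemma tt_lof (i : ℕ) (b : B i) :
    tt B f (DirectSum.lof ℤ ℕ (fun j => B j) i b)
      = DirectSum.lof ℤ ℕ (fun j => B j) i b
        - DirectSum.lof ℤ ℕ (fun j => B j) (i + 1) (f i b) := by
  simp [tt, shift_lof]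

lemma shift_apply_zero (x : ⨁ i, B i) : shift B f x 0 = 0 := by
  induction x using DirectSum.induction_on with
  | zero => simp
  | of i b =>
      rw [← DirectSum.lof_eq_of ℤ, shift_lof]
      rw [DirectSum.lof_eq_of]
      exact DirectSum.of_eq_of_ne _ _ _ (Nat.succ_ne_zero i).symm
  | add x y hx hy => rw [map_add, DFinsupp.add_apply, hx, hy, add_zero]

lemma shift_apply_succ (x : ⨁ i, B i) (i : ℕ) : shift B f x (i + 1) = f i (x i) := by
  induction x using DirectSum.induction_on with
  | zero => simp
  | of j b =>
      rw [← DirectSum.lof_eq_of ℤ, shift_lof]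
      simp only [DirectSum.lof_eq_of]
      by_cases h : j = i
      · subst h
        rw [DirectSum.of_eq_same, DirectSum.of_eq_same]
      · rw [DirectSum.of_eq_of_ne _ _ _ (by omega), DirectSum.of_eq_of_ne _ _ _ (Ne.symm h), map_zero]
  | add x y hx hy => rw [map_add, DFinsupp.add_apply, hx, hy, DFinsupp.add_apply, map_add]

lemma tt_injective : Function.Injective (tt B f) := by
  rw [injective_iff_map_eq_zero]
  intro x hx
  have hxe : ∀ i, x i = shift B f x i := by
    intro i
    have h0 : x - shift B f x = 0 := hx
    have := congrArg (fun z => z i + shift B f x i) h0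
    simpa [DFinsupp.sub_apply] using this
  have hz : ∀ i, x i = 0 := by
    intro i
    induction i with
    | zero => rw [hxe 0, shift_apply_zero]
    | succ n ih => rw [hxe (n+1), shift_apply_succ, ih, map_zero]
  exact DFinsupp.ext (fun i => by rw [hz i]; rfl)

variable (Cl : Type) [AddCommGroup Cl] (g : ∀ i, B i →+ Cl)

noncomputable def GG : (⨁ i, B i) →ₗ[ℤ] Cl :=
  DirectSum.toModule ℤ ℕ Cl fun i => (g i).toIntLinearMap

lemma GG_lof (i : ℕ) (b : B i) :
    GG B Cl g (DirectSum.lof ℤ ℕ (fun j => B j) i b) = g i b := by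
  simp [GG, DirectSum.toModule_lof]

variable (hg : ∀ i, (g (i + 1)).comp (f i) = g i)

include hg in
lemma GG_comp_tt : (GG B Cl g).comp (tt B f) = 0 := by
  apply DirectSum.linearMap_ext
  intro i
  ext b
  simp only [LinearMap.comp_apply, tt_lof, map_sub, GG_lof, LinearMap.zero_comp,
    LinearMap.zero_apply]
  rw [← hg i]
  simp

/-- mk ∘ lof as AddMonoidHom into the quotient by range tt -/
noncomputable def qmap (i : ℕ) : B i →+ ((⨁ j, B j) ⧸ LinearMap.range (tt B f)) :=
  (((LinearMap.range (tt B f)).mkQ).comp (DirectSum.lof ℤ ℕ (fun j => B j) i)).toAddMonoidHom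

lemma qmap_compat (i : ℕ) : (qmap B f (i + 1)).comp (f i) = qmap B f i := by
  ext b
  simp only [AddMonoidHom.comp_apply, qmap, LinearMap.toAddMonoidHom_coe, LinearMap.comp_apply]
  rw [eq_comm, ← sub_eq_zero, ← map_sub, Submodule.mkQ_apply, Submodule.Quotient.mk_eq_zero]
  exact ⟨_, tt_lof B f i b⟩

lemma qmap_ext {D : Type*} [AddCommGroup D]
    (φ₁ φ₂ : ((⨁ j, B j) ⧸ LinearMap.range (tt B f)) →+ D)
    (h : ∀ i, φ₁.comp (qmap B f i) = φ₂.comp (qmap B f i)) : φ₁ = φ₂ := by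
  ext q
  obtain ⟨x, rfl⟩ := (LinearMap.range (tt B f)).mkQ_surjective q
  induction x using DirectSum.induction_on with
  | zero => simp
  | of i b =>
      have := DFunLike.congr_fun (h i) b
      simpa [qmap, DirectSum.lof_eq_of] using this
  | add x y hx hy => rw [map_add]; rw [map_add, map_add, hx, hy]

variable (hcolim : ∀ (D : Type) [AddCommGroup D] (h : ∀ i, B i →+ D),
      (∀ i, (h (i + 1)).comp (f i) = h i) → ∃! φ : Cl →+ D, ∀ i, φ.comp (g i) = h i)

/-- the descended map Q → Cl -/
noncomputable def psi : ((⨁ j, B j) ⧸ LinearMap.range (tt B f)) →ₗ[ℤ] Cl :=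
  Submodule.liftQ _ (GG B Cl g)
    (by rw [LinearMap.range_le_ker_iff]; exact GG_comp_tt B f Cl g hg)

lemma psi_qmap (i : ℕ) (b : B i) : psi B f Cl g hg (qmap B f i b) = g i b := by
  simp [psi, qmap, GG_lof]

include hcolim hg in
lemma psi_bijective : Function.Bijective (psi B f Cl g hg) := by
  obtain ⟨φ, hφ, -⟩ := hcolim ((⨁ j, B j) ⧸ LinearMap.range (tt B f)) (qmap B f)
    (qmap_compat B f)
  -- ψ ∘ φ = id on Cl
  have h1 : ((psi B f Cl g hg).toAddMonoidHom.comp φ) = AddMonoidHom.id Cl := by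
    obtain ⟨φ₀, -, hu⟩ := hcolim Cl g hg
    have e1 := hu ((psi B f Cl g hg).toAddMonoidHom.comp φ) (by
      intro i
      ext b
      have := DFunLike.congr_fun (hφ i) b
      simp only [AddMonoidHom.comp_apply, LinearMap.toAddMonoidHom_coe] at this ⊢
      rw [this, psi_qmap])
    have e2 := hu (AddMonoidHom.id Cl) (by intro i; ext b; simp)
    rw [e1, e2]
  -- φ ∘ ψ = id on Q
  have h2 : (φ.comp (psi B f Cl g hg).toAddMonoidHom)
      = AddMonoidHom.id _ := by
    apply qmap_ext
    intro i
    ext b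
    have := DFunLike.congr_fun (hφ i) b
    simp only [AddMonoidHom.comp_apply, AddMonoidHom.id_apply,
      LinearMap.toAddMonoidHom_coe] at this ⊢
    rw [psi_qmap, ← this]
  constructor
  · intro a b hab
    have := DFunLike.congr_fun h2 a
    have hb := DFunLike.congr_fun h2 b
    simp only [AddMonoidHom.comp_apply, AddMonoidHom.id_apply,
      LinearMap.toAddMonoidHom_coe] at this hb
    rw [← this, ← hb, hab]
  · intro c
    refine ⟨φ c, ?_⟩
    have := DFunLike.congr_fun h1 c
    simpa using this

include hg hcolim in
lemma ker_GG : LinearMap.ker (GG B Cl g) = LinearMap.range (tt B f) := by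
  have hψ := psi_bijective B f Cl g hg hcolim
  ext x
  have hfac : GG B Cl g x = psi B f Cl g hg ((LinearMap.range (tt B f)).mkQ x) := by
    simp [psi]
  constructor
  · intro hx
    have h0 : psi B f Cl g hg ((LinearMap.range (tt B f)).mkQ x) = 0 := by
      rw [← hfac]; exact hx
    have := hψ.1 (by rw [h0, map_zero] :
      psi B f Cl g hg ((LinearMap.range (tt B f)).mkQ x) = psi B f Cl g hg 0)
    rwa [Submodule.mkQ_apply, Submodule.Quotient.mk_eq_zero] at this
  · intro hx
    have h0 : (LinearMap.range (tt B f)).mkQ x = 0 := by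
      rwa [Submodule.mkQ_apply, Submodule.Quotient.mk_eq_zero]
    simp only [LinearMap.mem_ker, hfac, h0, map_zero]

include hg hcolim in
lemma GG_surjective : Function.Surjective (GG B Cl g) := by
  intro c
  obtain ⟨q, hq⟩ := (psi_bijective B f Cl g hg hcolim).2 c
  obtain ⟨x, rfl⟩ := (LinearMap.range (tt B f)).mkQ_surjective q
  exact ⟨x, by simpa [psi] using hq⟩

-- ## category part
variable [∀ i, Module.Free ℤ (B i)]

noncomputable def Xfun : ℕ → ModuleCat.{0} ℤ
  | 0 => ModuleCat.of ℤ (⨁ i, B i)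
  | 1 => ModuleCat.of ℤ (⨁ i, B i)
  | _ => ModuleCat.of ℤ PUnit

noncomputable def dfun : ∀ n, Xfun B (n + 1) ⟶ Xfun B n
  | 0 => ModuleCat.ofHom (tt B f)
  | (_+1) => 0

noncomputable def cplx : ChainComplex (ModuleCat.{0} ℤ) ℕ :=
  ChainComplex.of (Xfun B) (dfun B f) (fun n => by
    show dfun B f (n+1) ≫ dfun B f n = 0
    show (0 : Xfun B (n+2) ⟶ Xfun B (n+1)) ≫ dfun B f n = 0
    simp)

instance cplx_projective (n : ℕ) : Projective ((cplx B f).X n) := by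
  show Projective (Xfun B n)
  match n with
  | 0 => exact ModuleCat.projective_of_free (Module.Free.chooseBasis ℤ (⨁ i, B i))
  | 1 => exact ModuleCat.projective_of_free (Module.Free.chooseBasis ℤ (⨁ i, B i))
  | (n+2) => exact ModuleCat.projective_of_free (Module.Free.chooseBasis ℤ PUnit)

omit [∀ i, Module.Free ℤ (B i)] in
lemma cplx_d_1_0 : (cplx B f).d 1 0 = ModuleCat.ofHom (tt B f) := by
  have := ChainComplex.of_d (Xfun B) (dfun B f) 0
  exact this

omit [∀ i, Module.Free ℤ (B i)] in
lemma cplx_d_succ (n : ℕ) : (cplx B f).d (n + 2) (n + 1) = 0 := by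
  have := ChainComplex.of_d (Xfun B) (dfun B f) (n+1)
  exact this

omit [∀ i, Module.Free ℤ (B i)] in
lemma cplx_exactAt_succ (n : ℕ) : (cplx B f).ExactAt (n + 1) := by
  rw [HomologicalComplex.exactAt_iff' _ (n + 2) (n + 1) n (by simp) (by simp)]
  match n with
  | 0 =>
      rw [ShortComplex.moduleCat_exact_iff]
      intro x hx
      have hx' : tt B f x = 0 := by
        have : (cplx B f).d 1 0 x = 0 := hx
        rwa [cplx_d_1_0] at this
      have hx0 : x = 0 := by
        apply tt_injective B f
        rw [hx']; exact (map_zero (tt B f)).symm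
      exact ⟨0, by rw [map_zero, hx0]⟩
  | (n+1) =>
      apply ShortComplex.exact_of_isZero_X₂
      exact ModuleCat.isZero_of_subsingleton (ModuleCat.of ℤ PUnit)

noncomputable def resol : ProjectiveResolution (ModuleCat.of ℤ Cl) where
  complex := cplx B f
  π := (ChainComplex.toSingle₀Equiv _ _).symm ⟨ModuleCat.ofHom (GG B Cl g), by
    rw [cplx_d_1_0]
    exact ModuleCat.hom_ext (GG_comp_tt B f Cl g hg)⟩
  quasiIso := ⟨fun n => by
    cases n with
    | zero =>
      rw [ChainComplex.quasiIsoAt₀_iff, ShortComplex.quasiIso_iff_of_zeros']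
      · constructor
        · rw [ShortComplex.moduleCat_exact_iff]
          intro x hx
          have hx' : x ∈ LinearMap.ker (GG B Cl g) := by
            exact hx
          rw [ker_GG B f Cl g hg hcolim] at hx'
          obtain ⟨y, hy⟩ := hx'
          refine ⟨y, ?_⟩
          show ((cplx B f).d 1 0) y = x
          rw [cplx_d_1_0]
          exact hy
        · rw [ModuleCat.epi_iff_surjective]
          intro c
          obtain ⟨x, hx⟩ := GG_surjective B f Cl g hg hcolim c
          exact ⟨x, hx⟩
      · rfl
      · rfl
      · rfl
    | succ n =>
      rw [quasiIsoAt_iff_exactAt']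
      · exact cplx_exactAt_succ B f n
      · apply ChainComplex.exactAt_succ_single_obj⟩

noncomputable def EE : (∀ i, B i →+ ℤ) ≃+ ((⨁ i, B i) →ₗ[ℤ] ℤ) where
  toFun a := DirectSum.toModule ℤ ℕ ℤ fun i => (a i).toIntLinearMap
  invFun φ := fun i => φ.toAddMonoidHom.comp (DirectSum.of (fun j => B j) i)
  left_inv := by
    intro a
    funext i
    ext b
    simp [← DirectSum.lof_eq_of ℤ, DirectSum.toModule_lof]
  right_inv := by
    intro φ
    apply DirectSum.linearMap_ext
    intro i
    ext b
    simp only [LinearMap.comp_apply]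
    rw [DirectSum.toModule_lof]
    show φ (DirectSum.of (fun j => B j) i b) = φ (DirectSum.lof ℤ ℕ (fun j => B j) i b)
    rw [DirectSum.lof_eq_of]
  map_add' := by
    intro a b
    apply DirectSum.linearMap_ext
    intro i
    ext c
    simp [DirectSum.toModule_lof]

lemma EE_lof (a : ∀ i, B i →+ ℤ) (i : ℕ) (b : B i) :
    EE B (a) (DirectSum.lof ℤ ℕ (fun j => B j) i b) = a i b := by
  simp [EE, DirectSum.toModule_lof]

end Lim1ExtAux

open Lim1ExtAux DirectSum in
/-- Let `{B i}` be a direct sequence of finitely generated free abelian groups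
with colimit `Cl` (given with its universal property), and consider the dual tower
`{Hom(B i, ℤ)}` with bonding maps given by precomposition. Then
`lim¹ᵢ Hom(Bᵢ, ℤ) ≅ Ext¹_ℤ(colimᵢ Bᵢ, ℤ)`, where `lim¹` is the cokernel of the
shift-difference map `1 − P` on `∏ᵢ Hom(Bᵢ, ℤ)`. -/
theorem lim1_hom_equiv_ext_colim
    (B : ℕ → Type) [∀ i, AddCommGroup (B i)]
    [∀ i, Module.Free ℤ (B i)] [∀ i, Module.Finite ℤ (B i)]
    (f : ∀ i, B i →+ B (i + 1))
    (Cl : Type) [AddCommGroup Cl] (g : ∀ i, B i →+ Cl)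
    (hg : ∀ i, (g (i + 1)).comp (f i) = g i)
    -- `Cl` is the colimit of the direct sequence: universal property
    (hcolim : ∀ (D : Type) [AddCommGroup D] (h : ∀ i, B i →+ D),
      (∀ i, (h (i + 1)).comp (f i) = h i) → ∃! φ : Cl →+ D, ∀ i, φ.comp (g i) = h i)
    -- the shift-difference map `1 − P` on `∏ᵢ Hom(Bᵢ, ℤ)`, with bonding maps
    -- `Hom(B (i+1), ℤ) → Hom(B i, ℤ)` given by precomposition with `f i`
    (d : (∀ i, B i →+ ℤ) →+ (∀ i, B i →+ ℤ))
    (hd : ∀ (a : ∀ i, B i →+ ℤ) (i : ℕ), d a i = a i - (a (i + 1)).comp (f i)) :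
    Nonempty
      (((∀ i, B i →+ ℤ) ⧸ d.range) ≃+
        ((Ext ℤ (ModuleCat.{0} ℤ) 1).obj (Opposite.op (ModuleCat.of ℤ Cl))).obj
          (ModuleCat.of ℤ ℤ)) := by
  classical
  -- the dual cochain complex
  set K : CochainComplex (ModuleCat.{0} ℤ) ℕ :=
    (cplx B f).linearYonedaObj ℤ (ModuleCat.of ℤ ℤ) with hK
  set S : ShortComplex (ModuleCat.{0} ℤ) := K.sc' 0 1 2 with hS
  -- subsingleton of maps out of the zero module
  haveI hps : Subsingleton ((cplx B f).X 2 : Type) := by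
    show Subsingleton PUnit
    infer_instance
  haveI : Subsingleton ((cplx B f).X 2 ⟶ ModuleCat.of ℤ ℤ) := by
    constructor
    intro a b
    apply ModuleCat.hom_ext; apply LinearMap.ext
    intro x
    have hx : x = 0 := Subsingleton.elim _ _
    rw [hx, map_zero, map_zero]
  haveI : Subsingleton (K.X 2 : Type) := by
    show Subsingleton ((cplx B f).X 2 ⟶ ModuleCat.of ℤ ℤ)
    infer_instance
  have hSg : S.g = 0 :=
    (ModuleCat.isZero_of_subsingleton (K.X 2)).eq_of_tgt _ _
  -- explicit left homology data with H the cokernel of S.f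
  let ldata : S.LeftHomologyData :=
    ShortComplex.LeftHomologyData.ofIsColimitCokernelCofork S hSg
      (ModuleCat.cokernelCocone S.f) (ModuleCat.cokernelIsColimit S.f)
  -- the Ext group is isomorphic to ldata.H
  let extIso : ((Ext ℤ (ModuleCat.{0} ℤ) 1).obj (Opposite.op (ModuleCat.of ℤ Cl))).obj
      (ModuleCat.of ℤ ℤ) ≅ ldata.H :=
    (resol B f Cl g hg hcolim).isoExt 1 (ModuleCat.of ℤ ℤ) ≪≫
      K.homologyIsoSc' 0 1 2 (by simp) (by simp) ≪≫ ldata.homologyIso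
  -- identify the lim¹ quotient with the cokernel of S.f
  have key : ∀ a : ∀ i, B i →+ ℤ, EE B (d a) = (EE B a).comp (tt B f) := by
    intro a
    apply DirectSum.linearMap_ext
    intro i
    apply LinearMap.ext
    intro b
    simp only [LinearMap.comp_apply]
    rw [EE_lof, tt_lof, map_sub, EE_lof, EE_lof, hd]
    simp
  let H0 : ((⨁ i, B i) →ₗ[ℤ] ℤ) ≃+ ((cplx B f).X 0 ⟶ ModuleCat.of ℤ ℤ) :=
    (ModuleCat.homAddEquiv (M := (cplx B f).X 0) (N := ModuleCat.of ℤ ℤ)).symm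
  let H1 : ((⨁ i, B i) →ₗ[ℤ] ℤ) ≃+ ((cplx B f).X 1 ⟶ ModuleCat.of ℤ ℤ) :=
    (ModuleCat.homAddEquiv (M := (cplx B f).X 1) (N := ModuleCat.of ℤ ℤ)).symm
  have hSf : ∀ ψ : ((⨁ i, B i) →ₗ[ℤ] ℤ), S.f (H0 ψ) = H1 (ψ.comp (tt B f)) := by
    intro ψ
    have h1 : S.f (H0 ψ) = (cplx B f).d 1 0 ≫ H0 ψ := rfl
    rw [h1, cplx_d_1_0]
    rfl
  let EE' : (∀ i, B i →+ ℤ) ≃+ (K.X 1 : Type) := (EE B).trans H1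
  have hmap : AddSubgroup.map EE'.toAddMonoidHom d.range
      = (LinearMap.range S.f.hom).toAddSubgroup := by
    ext y
    constructor
    · rintro ⟨x, ⟨a, rfl⟩, rfl⟩
      refine ⟨H0 (EE B a), ?_⟩
      show S.f (H0 (EE B a)) = H1 (EE B (d a))
      rw [hSf, key]
    · rintro ⟨ψ, rfl⟩
      refine ⟨d ((EE B).symm (H0.symm ψ)), ⟨_, rfl⟩, ?_⟩
      show H1 (EE B (d ((EE B).symm (H0.symm ψ)))) = S.f ψ
      rw [key, AddEquiv.apply_symm_apply, ← hSf]; exact congrArg S.f (H0.apply_symm_apply ψ)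
  haveI : ((LinearMap.range S.f.hom).toAddSubgroup : AddSubgroup (K.X 1 : Type)).Normal :=
    AddSubgroup.normal_of_isAddCommutative _
  let e1 : ((∀ i, B i →+ ℤ) ⧸ d.range) ≃+
      ((K.X 1 : Type) ⧸ (LinearMap.range S.f.hom).toAddSubgroup) :=
    @QuotientAddGroup.congr _ _ _ _ d.range _ _ (by exact this) EE' hmap
  let e2 : ((K.X 1 : Type) ⧸ (LinearMap.range S.f.hom).toAddSubgroup) ≃+ (ldata.H : Type) :=
    AddEquiv.refl _
  have hia : ∀ x, extIso.hom (extIso.inv x) = x := fun x => by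
    have h := extIso.inv_hom_id
    calc extIso.hom (extIso.inv x) = (extIso.inv ≫ extIso.hom) x := rfl
    _ = x := by rw [h]; rfl
  have hai : ∀ x, extIso.inv (extIso.hom x) = x := fun x => by
    have h := extIso.hom_inv_id
    calc extIso.inv (extIso.hom x) = (extIso.hom ≫ extIso.inv) x := rfl
    _ = x := by rw [h]; rfl
  let e3 : (ldata.H : Type) ≃+
      ((((Ext ℤ (ModuleCat.{0} ℤ) 1).obj (Opposite.op (ModuleCat.of ℤ Cl))).obj
        (ModuleCat.of ℤ ℤ)) : Type) :=
    AddEquiv.mk' ⟨extIso.inv.hom, extIso.hom.hom, hia, hai⟩ (map_add extIso.inv.hom)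
  exact ⟨(e1.trans e2).trans e3⟩
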